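/- Let H be a group that is δ-hyperbolic with respect to a finite generating set S, and let z, b ∈ H. There exist an element x ∈ H and a constant c, given by a computable function of δ, ♯S and |b|, such that for every integer k one has z⁻¹ b^k z = x⁻¹ ·_c b^k ·_c x (with the same x for all k). -/

import Mathlib

variable {G : Type*} [Group G]

/-- Word length of `g` with respect to a generating set `S`: the least number of
letters from `S ∪ S⁻¹` whose product is `g`. -/
noncomputable def wlen (S : Set G) (g : G) : ℕ :=
  sInf {n : ℕ | ∃ L : List G, (∀ x ∈ L, x ∈ S ∨ x⁻¹ ∈ S) ∧ L.length = n ∧ L.prod = g}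

/-- A discrete geodesic from `a` to `b` in the Cayley graph of `G` w.r.t. `S`:
the sequence of vertices visited by a geodesic path. -/
def IsDGeodesic (S : Set G) (a b : G) (p : ℕ → G) : Prop :=
  p 0 = a ∧ p (wlen S (a⁻¹ * b)) = b ∧
    ∀ i ≤ wlen S (a⁻¹ * b), ∀ j ≤ wlen S (a⁻¹ * b),
      wlen S ((p i)⁻¹ * p j) = Nat.dist i j

/-- `G` is `δ`-hyperbolic with respect to `S`: every geodesic triangle in the
Cayley graph `Γ(G,S)` is `δ`-thin, rendered on the vertex set. -/
def GroupHyperbolic (S : Set G) (δ : ℝ) : Prop :=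
  ∀ a b c : G, ∀ p q : ℕ → G, IsDGeodesic S a b p → IsDGeodesic S a c q →
    ∀ i : ℕ,
      (i : ℝ) ≤ ((wlen S (a⁻¹ * b) : ℝ) + (wlen S (a⁻¹ * c) : ℝ)
          - (wlen S (b⁻¹ * c) : ℝ)) / 2 →
      (wlen S ((p i)⁻¹ * q i) : ℝ) ≤ δ

/-- The small-cancellation notation `u ·_c v`: the product `u * v` cancels less
than `c`, i.e. `(|u| + |v| - |uv|)/2 < c`. -/
def CDot (S : Set G) (c : ℝ) (u v : G) : Prop :=
  ((wlen S u : ℝ) + (wlen S v : ℝ) - (wlen S (u * v) : ℝ)) / 2 < c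

namespace Stmt12Aux

def IsWord (S : Set G) (L : List G) : Prop := ∀ x ∈ L, x ∈ S ∨ x⁻¹ ∈ S

lemma wlen_le (S : Set G) {L : List G} (hL : IsWord S L) : wlen S L.prod ≤ L.length :=
  Nat.sInf_le ⟨L, hL, rfl, rfl⟩

lemma wlen_le' (S : Set G) {L : List G} {g : G} (hL : IsWord S L) (hp : L.prod = g) :
    wlen S g ≤ L.length := hp ▸ wlen_le S hL

lemma exists_word (S : Set G) (hgen : Subgroup.closure S = ⊤) (g : G) :
    ∃ L : List G, IsWord S L ∧ L.prod = g := by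
  have hg : g ∈ Subgroup.closure S := by rw [hgen]; trivial
  induction hg using Subgroup.closure_induction with
  | mem x hx =>
      refine ⟨[x], ?_, by simp⟩
      intro y hy; simp at hy; subst hy; exact Or.inl hx
  | one =>
      refine ⟨[], ?_, by simp⟩
      intro y hy; simp at hy
  | mul x y _ _ ihx ihy =>
      obtain ⟨L1, h1, p1⟩ := ihx
      obtain ⟨L2, h2, p2⟩ := ihy
      refine ⟨L1 ++ L2, ?_, by rw [List.prod_append, p1, p2]⟩
      intro t ht
      rcases List.mem_append.mp ht with h | h
      exacts [h1 t h, h2 t h]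
  | inv x _ ihx =>
      obtain ⟨L, h1, p1⟩ := ihx
      refine ⟨(L.map (fun t => t⁻¹)).reverse, ?_, by rw [← List.prod_inv_reverse, p1]⟩
      intro t ht
      simp only [List.mem_reverse, List.mem_map] at ht
      obtain ⟨y, hy, rfl⟩ := ht
      rcases h1 y hy with h | h
      · exact Or.inr (by simpa using h)
      · exact Or.inl h

lemma exists_min_word (S : Set G) (hgen : Subgroup.closure S = ⊤) (g : G) :
    ∃ L : List G, IsWord S L ∧ L.length = wlen S g ∧ L.prod = g := by
  obtain ⟨L, hL, hp⟩ := exists_word S hgen g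
  have hmem : L.length ∈ {n : ℕ | ∃ L' : List G,
      (∀ x ∈ L', x ∈ S ∨ x⁻¹ ∈ S) ∧ L'.length = n ∧ L'.prod = g} := ⟨L, hL, rfl, hp⟩
  exact Nat.sInf_mem ⟨L.length, hmem⟩

lemma wlen_one (S : Set G) : wlen S (1 : G) = 0 :=
  Nat.eq_zero_of_le_zero (Nat.sInf_le ⟨[], by intro y hy; simp at hy, by simp, by simp⟩)

lemma eq_one_of_wlen (S : Set G) (hgen : Subgroup.closure S = ⊤) {g : G}
    (h : wlen S g = 0) : g = 1 := by
  obtain ⟨L, _, hlen, hp⟩ := exists_min_word S hgen g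
  rw [h] at hlen
  rw [List.length_eq_zero_iff] at hlen
  rw [hlen] at hp; simpa using hp.symm

lemma wlen_inv_le (S : Set G) (hgen : Subgroup.closure S = ⊤) (g : G) :
    wlen S g⁻¹ ≤ wlen S g := by
  obtain ⟨L, hL, hlen, hp⟩ := exists_min_word S hgen g
  refine le_trans (wlen_le' S (L := (L.map (fun t => t⁻¹)).reverse) ?_ ?_) ?_
  · intro t ht
    simp only [List.mem_reverse, List.mem_map] at ht
    obtain ⟨y, hy, rfl⟩ := ht
    rcases hL y hy with h | h
    · exact Or.inr (by simpa using h)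
    · exact Or.inl h
  · rw [← List.prod_inv_reverse, hp]
  · simpa using hlen.le

lemma wlen_inv (S : Set G) (hgen : Subgroup.closure S = ⊤) (g : G) :
    wlen S g⁻¹ = wlen S g :=
  le_antisymm (wlen_inv_le S hgen g) (by simpa using wlen_inv_le S hgen g⁻¹)

lemma wlen_mul_le (S : Set G) (hgen : Subgroup.closure S = ⊤) (g h : G) :
    wlen S (g * h) ≤ wlen S g + wlen S h := by
  obtain ⟨L1, h1, l1, p1⟩ := exists_min_word S hgen g
  obtain ⟨L2, h2, l2, p2⟩ := exists_min_word S hgen h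
  refine le_trans (wlen_le' S (L := L1 ++ L2) ?_ ?_) ?_
  · intro t ht; rcases List.mem_append.mp ht with hh | hh; exacts [h1 t hh, h2 t hh]
  · rw [List.prod_append, p1, p2]
  · simp [l1, l2]

lemma segment_wlen (S : Set G) (hgen : Subgroup.closure S = ⊤) {L : List G}
    (hW : IsWord S L) (hmin : L.length = wlen S L.prod) {i j : ℕ} (hij : i ≤ j)
    (hj : j ≤ L.length) :
    wlen S (((L.take i).prod)⁻¹ * (L.take j).prod) = j - i := by
  have hsplit : L.take j = L.take i ++ (L.drop i).take (j - i) := by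
    rw [← List.take_add]; congr 1; omega
  have key : ((L.take i).prod)⁻¹ * (L.take j).prod = ((L.drop i).take (j - i)).prod := by
    rw [hsplit, List.prod_append]
    simp [mul_assoc]
  have h1 : wlen S (((L.take i).prod)⁻¹ * (L.take j).prod) ≤ j - i := by
    rw [key]
    refine le_trans (wlen_le S ?_) ?_
    · intro t ht
      exact hW t (List.drop_subset i L (List.take_subset _ _ ht))
    · simp only [List.length_take, List.length_drop]
      omega
  have h2 : j - i ≤ wlen S (((L.take i).prod)⁻¹ * (L.take j).prod) := by
    by_contra hcon
    push_neg at hcon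
    obtain ⟨M, hM, hMlen, hMprod⟩ := exists_min_word S hgen (((L.take i).prod)⁻¹ * (L.take j).prod)
    have hprod : (L.take i ++ M ++ L.drop j).prod = L.prod := by
      rw [List.prod_append, List.prod_append, hMprod]
      have : (L.take i).prod * (((L.take i).prod)⁻¹ * (L.take j).prod) = (L.take j).prod := by
        group
      rw [this, List.prod_take_mul_prod_drop]
    have hW' : IsWord S (L.take i ++ M ++ L.drop j) := by
      intro t ht
      simp only [List.mem_append] at ht
      rcases ht with (h | h) | h
      · exact hW t (List.take_subset _ _ h)
      · exact hM t h
      · exact hW t (List.drop_subset _ _ h)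
    have := wlen_le' S hW' hprod
    rw [← hmin] at this
    simp only [List.length_append, List.length_take, List.length_drop] at this
    omega
  omega

/-- A geodesic path from 1 to g, with its key properties. -/
lemma exists_geo (S : Set G) (hgen : Subgroup.closure S = ⊤) (g : G) :
    ∃ p : ℕ → G, p 0 = 1 ∧ p (wlen S g) = g ∧
      ∀ i ≤ wlen S g, ∀ j ≤ wlen S g, wlen S ((p i)⁻¹ * p j) = Nat.dist i j := by
  obtain ⟨L, hL, hlen, hp⟩ := exists_min_word S hgen g
  have hmin : L.length = wlen S L.prod := by rw [hp, ← hlen]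
  refine ⟨fun i => (L.take i).prod, by simp, ?_, ?_⟩
  · show (L.take (wlen S g)).prod = g
    rw [← hlen, List.take_length, hp]
  · intro i hi j hj
    show wlen S (((L.take i).prod)⁻¹ * (L.take j).prod) = Nat.dist i j
    rcases le_total i j with h | h
    · rw [segment_wlen S hgen hL hmin h (by omega), Nat.dist_eq_sub_of_le h]
    · rw [← wlen_inv S hgen, mul_inv_rev, inv_inv,
        segment_wlen S hgen hL hmin h (by omega), Nat.dist_comm,
        Nat.dist_eq_sub_of_le h]


lemma isDGeo_of_geo {S : Set G} {g : G} {p : ℕ → G}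
    (h0 : p 0 = 1) (h1 : p (wlen S g) = g)
    (hd : ∀ i ≤ wlen S g, ∀ j ≤ wlen S g, wlen S ((p i)⁻¹ * p j) = Nat.dist i j) :
    IsDGeodesic S 1 g p := by
  unfold IsDGeodesic
  have e : (1:G)⁻¹ * g = g := by simp
  rw [e]
  exact ⟨h0, h1, hd⟩

lemma isDGeo_translate {S : Set G} {a c : G} {p : ℕ → G} (g : G)
    (h : IsDGeodesic S a c p) : IsDGeodesic S (g * a) (g * c) (fun i => g * p i) := by
  obtain ⟨h0, h1, hd⟩ := h
  unfold IsDGeodesic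
  have e : (g * a)⁻¹ * (g * c) = a⁻¹ * c := by group
  rw [e]
  refine ⟨?_, ?_, ?_⟩
  · show g * p 0 = g * a
    rw [h0]
  · show g * p (wlen S (a⁻¹ * c)) = g * c
    rw [h1]
  · intro i hi j hj
    show wlen S ((g * p i)⁻¹ * (g * p j)) = Nat.dist i j
    have e2 : (g * p i)⁻¹ * (g * p j) = (p i)⁻¹ * p j := by group
    rw [e2]
    exact hd i hi j hj

lemma isDGeo_reverse {S : Set G} (hgen : Subgroup.closure S = ⊤) {a c : G} {p : ℕ → G}
    (h : IsDGeodesic S a c p) :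
    IsDGeodesic S c a (fun i => p (wlen S (a⁻¹ * c) - i)) := by
  obtain ⟨h0, h1, hd⟩ := h
  have e : wlen S (c⁻¹ * a) = wlen S (a⁻¹ * c) := by
    rw [← wlen_inv S hgen (a⁻¹ * c), mul_inv_rev, inv_inv]
  unfold IsDGeodesic
  rw [e]
  refine ⟨?_, ?_, ?_⟩
  · show p (wlen S (a⁻¹ * c) - 0) = c
    simpa using h1
  · show p (wlen S (a⁻¹ * c) - wlen S (a⁻¹ * c)) = a
    simpa using h0
  · intro i hi j hj
    show wlen S ((p (wlen S (a⁻¹ * c) - i))⁻¹ * p (wlen S (a⁻¹ * c) - j)) = Nat.dist i j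
    rw [hd _ (by omega) _ (by omega)]
    simp only [Nat.dist]
    omega

lemma ball_bound (S : Set G) (hS : S.Finite) (hgen : Subgroup.closure S = ⊤) (R : ℕ) :
    ∃ F : Finset G, (∀ g : G, wlen S g ≤ R → g ∈ F) ∧
      F.card ≤ (2 * S.ncard + 1) ^ (R + 1) := by
  classical
  induction R with
  | zero =>
      refine ⟨{1}, ?_, ?_⟩
      · intro g hg
        have : g = 1 := eq_one_of_wlen S hgen (Nat.le_zero.mp hg)
        simp [this]
      · have h1 : ({1} : Finset G).card = 1 := Finset.card_singleton _
        rw [h1]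
        exact Nat.one_le_pow _ _ (by omega)
  | succ R ih =>
      obtain ⟨F, hF, hcard⟩ := ih
      set T : Finset G := hS.toFinset ∪ hS.toFinset.image (fun t => t⁻¹) with hT
      have hTcard : T.card ≤ 2 * S.ncard := by
        have h1 : hS.toFinset.card = S.ncard := (Set.ncard_eq_toFinset_card _ hS).symm
        calc T.card ≤ hS.toFinset.card + (hS.toFinset.image (fun t => t⁻¹)).card :=
              Finset.card_union_le _ _
          _ ≤ hS.toFinset.card + hS.toFinset.card :=
              Nat.add_le_add_left Finset.card_image_le _
          _ = 2 * S.ncard := by rw [h1]; ring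
      refine ⟨F ∪ Finset.image₂ (· * ·) T F, ?_, ?_⟩
      · intro g hg
        obtain ⟨L, hL, hlen, hp⟩ := exists_min_word S hgen g
        cases L with
        | nil =>
            have : g = 1 := by simpa using hp.symm
            refine Finset.mem_union_left _ (hF g ?_)
            rw [this, wlen_one]
            exact Nat.zero_le R
        | cons a tl =>
            have ha : a ∈ T := by
              rcases hL a List.mem_cons_self with h | h
              · exact Finset.mem_union_left _ (hS.mem_toFinset.mpr h)
              · refine Finset.mem_union_right _ ?_
                exact Finset.mem_image.mpr ⟨a⁻¹, hS.mem_toFinset.mpr h, by simp⟩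
            have htl : tl.prod ∈ F := by
              refine hF tl.prod ?_
              have h1 : wlen S tl.prod ≤ tl.length :=
                wlen_le S (fun x hx => hL x (List.mem_cons_of_mem a hx))
              have h2 : (a :: tl).length = wlen S g := hlen
              simp only [List.length_cons] at h2
              omega
            refine Finset.mem_union_right _ ?_
            refine Finset.mem_image₂.mpr ⟨a, ha, tl.prod, htl, ?_⟩
            rw [← hp, List.prod_cons]
      · calc (F ∪ Finset.image₂ (· * ·) T F).card
            ≤ F.card + (Finset.image₂ (· * ·) T F).card := Finset.card_union_le _ _
          _ ≤ F.card + T.card * F.card :=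
              Nat.add_le_add_left (Finset.card_image₂_le _ _ _) _
          _ = (1 + T.card) * F.card := by ring
          _ ≤ (1 + 2 * S.ncard) * (2 * S.ncard + 1) ^ (R + 1) :=
              Nat.mul_le_mul (by omega) hcard
          _ = (2 * S.ncard + 1) ^ (R + 1 + 1) := by ring

end Stmt12Aux

-- chunk 3: the key lemma
namespace Stmt12Aux
noncomputable def Jfun (δ : ℝ) (n : ℕ) : ℕ :=
  (10 * ⌈δ⌉₊ + 1) * (2 * n + 1) ^ (2 * ⌈δ⌉₊ + 1) + 1

noncomputable def Gfun (δ : ℝ) (n m : ℕ) : ℕ :=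
  8 * (m * Jfun δ n) + 20 * (⌈δ⌉₊ + m + 1)

set_option maxHeartbeats 3000000 in
lemma key_lemma {G : Type*} [Group G] (S : Set G) (δ : ℝ) (hS : S.Finite)
    (hgen : Subgroup.closure S = ⊤) (hδ : 0 ≤ δ) (hyp : GroupHyperbolic S δ)
    (b x : G) (hminx : ∀ t : ℤ, wlen S x ≤ wlen S (b ^ t * x)) (k : ℤ) :
    ((wlen S x : ℝ) + (wlen S (b ^ k) : ℝ) - (wlen S (x⁻¹ * b ^ k) : ℝ)) / 2 <
      (Gfun δ S.ncard (wlen S b) : ℝ) + 1 := by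
  classical
  by_contra hcon
  push_neg at hcon
  set K : ℕ := ⌈δ⌉₊ with hKdef
  set n : ℕ := S.ncard with hndef
  set m : ℕ := wlen S b with hmdef
  set J : ℕ := Jfun δ n with hJdef
  set Γ : ℕ := Gfun δ n m with hΓdef
  have hδK : δ ≤ (K : ℝ) := Nat.le_ceil δ
  have hK0 : (0:ℝ) ≤ K := le_trans hδ hδK
  have hsym : ∀ u : G, wlen S u⁻¹ = wlen S u := wlen_inv S hgen
  have hsub : ∀ u v : G, wlen S (u * v) ≤ wlen S u + wlen S v := wlen_mul_le S hgen
  have hpowneg : ∀ t : ℤ, wlen S (b ^ (-t)) = wlen S (b ^ t) := by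
    intro t; rw [zpow_neg]; exact hsym _
  have hJeq : J = (10*K+1) * (2*n+1)^(2*K+1) + 1 := by rw [hJdef, hKdef]; rfl
  have hΓeq : Γ = 8*(m*J) + 20*(K+m+1) := by rw [hΓdef, hJdef, hKdef]; rfl
  have hJ1 : 1 ≤ J := by omega
  have hΓR : (Γ:ℝ) = 8*((m:ℝ)*J) + 20*((K:ℝ) + m + 1) := by rw [hΓeq]; push_cast; ring
  -- trivial case m = 0
  rcases Nat.eq_zero_or_pos m with hm0 | hm1
  · have hb1 : b = 1 := eq_one_of_wlen S hgen hm0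
    have hbk : b ^ k = 1 := by rw [hb1, one_zpow]
    have hA : wlen S x = wlen S (x⁻¹ * b ^ k) := by rw [hbk, mul_one, hsym]
    have hL : wlen S (b ^ k) = 0 := by rw [hbk, wlen_one]
    rw [hL, ← hA] at hcon
    have h0 : (0:ℝ) ≤ (Γ:ℝ) := Nat.cast_nonneg _
    linarith
  have hmR : (1:ℝ) ≤ m := by exact_mod_cast hm1
  have hJR : (1:ℝ) ≤ J := by exact_mod_cast hJ1
  -- basic length facts
  have hAX : wlen S x ≤ wlen S (x⁻¹ * b ^ k) := by
    have h1 := hminx (-k)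
    have h2 : wlen S (b ^ (-k) * x) = wlen S (x⁻¹ * b ^ k) := by
      rw [← hsym (b ^ (-k) * x)]
      congr 1
      rw [mul_inv_rev, zpow_neg, inv_inv]
    omega
  have hLle : wlen S (b ^ k) ≤ wlen S x + wlen S (x⁻¹ * b ^ k) := by
    have h := hsub x (x⁻¹ * b ^ k)
    rw [mul_inv_cancel_left] at h
    exact h
  set γ : ℝ := ((wlen S x : ℝ) + (wlen S (b ^ k) : ℝ) - (wlen S (x⁻¹ * b ^ k) : ℝ)) / 2
    with hγdef
  have hγX : γ ≤ (wlen S x : ℝ) := by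
    have h : (wlen S (b^k):ℝ) ≤ (wlen S x:ℝ) + (wlen S (x⁻¹*b^k):ℝ) := by exact_mod_cast hLle
    rw [hγdef]; linarith
  have hγL2 : 2 * γ ≤ (wlen S (b ^ k) : ℝ) := by
    have h : (wlen S x:ℝ) ≤ (wlen S (x⁻¹*b^k):ℝ) := by exact_mod_cast hAX
    rw [hγdef]; linarith
  have hγ0 : 0 ≤ γ := by
    have h0 : (0:ℝ) ≤ (Γ:ℝ) := Nat.cast_nonneg _
    linarith
  set istar : ℕ := ⌊γ⌋₊ with histardef
  have histar_le : (istar : ℝ) ≤ γ := Nat.floor_le hγ0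
  have histar_ge : Γ + 1 ≤ istar := Nat.le_floor (by exact_mod_cast hcon)
  have histar_geR : (Γ:ℝ) + 1 ≤ (istar:ℝ) := by exact_mod_cast histar_ge
  have hbig : 8*((m:ℝ)*J) + 20*((K:ℝ) + m + 1) + 1 ≤ (istar:ℝ) := by
    rw [← hΓR]; exact histar_geR
  have h2γ : 2*(istar:ℝ) ≤ (wlen S (b^k):ℝ) := by linarith
  -- power lengths
  have hpow_le : ∀ jn : ℕ, wlen S (b ^ (jn:ℤ)) ≤ jn * m := by
    intro jn; induction jn with
    | zero => simp [wlen_one]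
    | succ j ih =>
        have e : b ^ (((j+1:ℕ)):ℤ) = b ^ (j:ℤ) * b := by
          push_cast
          rw [zpow_add, zpow_one]
        have h := hsub (b ^ (j:ℤ)) b
        rw [← e] at h
        have h2 : wlen S (b ^ ((j+1:ℕ):ℤ)) ≤ j * m + m :=
          le_trans h (Nat.add_le_add_right ih m)
        rw [Nat.succ_mul]
        exact h2
  have hstep1 : ∀ t : ℤ, wlen S (b ^ t) ≤ wlen S (b ^ (t-1)) + m := by
    intro t
    have h := hsub (b ^ (t-1)) (b^(1:ℤ))
    rw [← zpow_add] at h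
    have e2 : t - 1 + 1 = t := by ring
    rw [e2] at h
    rw [zpow_one] at h
    exact h
  have hstep2 : ∀ t : ℤ, wlen S (b ^ (t-1)) ≤ wlen S (b ^ t) + m := by
    intro t
    have h := hsub (b ^ t) (b^(-1:ℤ))
    rw [← zpow_add] at h
    have e2 : t + -1 = t - 1 := by ring
    rw [e2] at h
    have e3 : wlen S (b ^ (-1:ℤ)) = m := by
      rw [hpowneg 1, zpow_one]
    rw [e3] at h
    exact h
  have hppsub : ∀ s t : ℤ, wlen S (b ^ (s + t)) ≤ wlen S (b^s) + wlen S (b^t) := by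
    intro s t
    have h := hsub (b^s) (b^t)
    rw [← zpow_add] at h
    exact h
  -- geodesics
  obtain ⟨π, hπ0, hπ1, hπd⟩ := exists_geo S hgen x
  choose W hW0 hW1 hWd using fun t : ℤ => exists_geo S hgen (b ^ t)
  have hwlen : ∀ (t : ℤ) (i : ℕ), i ≤ wlen S (b ^ t) → wlen S (W t i) = i := by
    intro t i hi
    have h := hWd t 0 (Nat.zero_le _) i hi
    rw [hW0 t, inv_one, one_mul, Nat.dist_zero_left] at h
    exact h
  -- star : minimality + fellow travelling
  have star : ∀ (t : ℤ) (i : ℕ), (i:ℝ) ≤ γ →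
      (i:ℝ) - δ ≤ (wlen S ((b ^ t)⁻¹ * W k i) : ℝ) := by
    intro t i hi
    have hiX : i ≤ wlen S x := by
      have h : (i:ℝ) ≤ (wlen S x : ℝ) := le_trans hi hγX
      exact_mod_cast h
    have hiL : i ≤ wlen S (b ^ k) := by
      have h : (i:ℝ) ≤ (wlen S (b^k) : ℝ) := by linarith
      exact_mod_cast h
    have hg1 : IsDGeodesic S 1 x π := isDGeo_of_geo hπ0 hπ1 hπd
    have hg2 : IsDGeodesic S 1 (b ^ k) (W k) := isDGeo_of_geo (hW0 k) (hW1 k) (hWd k)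
    have hfel : (wlen S ((π i)⁻¹ * W k i) : ℝ) ≤ δ := by
      refine hyp 1 x (b ^ k) π (W k) hg1 hg2 i ?_
      rw [inv_one, one_mul, one_mul]
      rw [← hγdef]
      exact hi
    have hM : i ≤ wlen S ((b ^ t)⁻¹ * π i) := by
      have h1 := hminx (-t)
      have hx_split : b ^ (-t) * x = (b ^ (-t) * π i) * ((π i)⁻¹ * x) := by group
      have h2 : wlen S (b ^ (-t) * x) ≤ wlen S (b ^ (-t) * π i) + wlen S ((π i)⁻¹ * x) := by
        rw [hx_split]; exact hsub _ _
      have h3 : wlen S ((π i)⁻¹ * x) = wlen S x - i := by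
        have h4 := hπd i hiX (wlen S x) le_rfl
        rw [hπ1, Nat.dist_eq_sub_of_le hiX] at h4
        exact h4
      have e : (b ^ t)⁻¹ = b ^ (-t) := (zpow_neg b t).symm
      rw [e]
      omega
    have htri : wlen S ((b ^ t)⁻¹ * π i) ≤
        wlen S ((b ^ t)⁻¹ * W k i) + wlen S ((π i)⁻¹ * W k i) := by
      have e : (b ^ t)⁻¹ * π i = ((b ^ t)⁻¹ * W k i) * ((W k i)⁻¹ * π i) := by group
      have h4 : wlen S ((W k i)⁻¹ * π i) = wlen S ((π i)⁻¹ * W k i) := by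
        rw [← hsym ((π i)⁻¹ * W k i), mul_inv_rev, inv_inv]
      calc wlen S ((b ^ t)⁻¹ * π i) ≤ wlen S ((b ^ t)⁻¹ * W k i) + wlen S ((W k i)⁻¹ * π i) := by
            rw [e]; exact hsub _ _
        _ = wlen S ((b ^ t)⁻¹ * W k i) + wlen S ((π i)⁻¹ * W k i) := by rw [h4]
    have hMr : (i:ℝ) ≤ (wlen S ((b^t)⁻¹ * π i) : ℝ) := by exact_mod_cast hM
    have htrir : (wlen S ((b^t)⁻¹ * π i):ℝ) ≤
        (wlen S ((b^t)⁻¹ * W k i):ℝ) + (wlen S ((π i)⁻¹ * W k i):ℝ) := by exact_mod_cast htri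
    linarith

  have hmJ1 : (1:ℝ) ≤ (m:ℝ)*J := by
    calc (1:ℝ) = 1*1 := by ring
      _ ≤ (m:ℝ)*J := mul_le_mul hmR hJR zero_le_one (by linarith)
  -- the double thin-triangle estimate
  have use_RR : ∀ (t : ℤ) (i : ℕ),
      (istar:ℝ) - 3*K ≤ (i:ℝ) → (i:ℝ) ≤ (istar:ℝ) + ((m:ℝ)*J + m) →
      (wlen S (b ^ t) : ℝ) ≤ (m:ℝ)*J + m →
      (wlen S (b ^ k) : ℝ) - (wlen S (b ^ (k-t)) : ℝ) ≤ 3*δ + m →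
      ∀ s : ℕ, (s:ℤ) = (i:ℤ) - ((wlen S (b^k):ℤ) - (wlen S (b^(k-t)):ℤ)) →
      (wlen S ((W k i)⁻¹ * (b ^ t * W k s)) : ℝ) ≤ 2*δ ∧ s ≤ wlen S (b ^ k) := by
    intro t i hi1 hi2 hlt hprior s hs
    have hdge : -(wlen S (b^t):ℝ) ≤ (wlen S (b^k):ℝ) - (wlen S (b^(k-t)):ℝ) := by
      have h := hppsub k (-t)
      rw [hpowneg t] at h
      have e : k + -t = k - t := by ring
      rw [e] at h
      have hr : (wlen S (b^(k-t)):ℝ) ≤ (wlen S (b^k):ℝ) + (wlen S (b^t):ℝ) := by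
        exact_mod_cast h
      linarith
    have hsR : (s:ℝ) = (i:ℝ) - ((wlen S (b^k):ℝ) - (wlen S (b^(k-t)):ℝ)) := by
      exact_mod_cast hs
    have hiLk : i ≤ wlen S (b^k) := by
      have h : (i:ℝ) ≤ (wlen S (b^k):ℝ) := by linarith
      exact_mod_cast h
    have hsLk : s ≤ wlen S (b ^ k) := by
      have h : (s:ℝ) ≤ (wlen S (b^k):ℝ) := by linarith
      exact_mod_cast h
    have hiLkR : (i:ℝ) ≤ (wlen S (b^k):ℝ) := by exact_mod_cast hiLk
    have hsLkt : s ≤ wlen S (b ^ (k - t)) := by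
      have h : (s:ℝ) ≤ (wlen S (b^(k-t)):ℝ) := by linarith
      exact_mod_cast h
    refine ⟨?_, hsLk⟩
    have hgk : IsDGeodesic S 1 (b ^ k) (W k) := isDGeo_of_geo (hW0 k) (hW1 k) (hWd k)
    have hgkt : IsDGeodesic S 1 (b ^ (k - t)) (W (k - t)) :=
      isDGeo_of_geo (hW0 (k - t)) (hW1 (k - t)) (hWd (k - t))
    have hp := isDGeo_reverse hgen hgk
    have hq0 := isDGeo_reverse hgen hgkt
    have hq1 := isDGeo_translate (b ^ t) hq0
    have et : b ^ t * b ^ (k - t) = b ^ k := by rw [← zpow_add]; congr 1; ring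
    rw [et, mul_one] at hq1
    simp only [inv_one, one_mul] at hp hq1
    have e2 : wlen S ((b ^ k)⁻¹ * b ^ t) = wlen S (b ^ (k - t)) := by
      have e : (b ^ k)⁻¹ * b ^ t = b ^ (-(k - t)) := by
        rw [← zpow_neg, ← zpow_add]; congr 1; ring
      rw [e, hpowneg (k - t)]
    have cond1 : ((wlen S (b ^ k) - i : ℕ):ℝ) ≤
        ((wlen S ((b ^ k)⁻¹ * 1):ℝ) + (wlen S ((b ^ k)⁻¹ * b ^ t):ℝ)
          - (wlen S ((1:G)⁻¹ * b ^ t):ℝ)) / 2 := by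
      have e1 : wlen S ((b ^ k)⁻¹ * 1) = wlen S (b ^ k) := by rw [mul_one]; exact hsym _
      have e3 : wlen S ((1:G)⁻¹ * b ^ t) = wlen S (b ^ t) := by rw [inv_one, one_mul]
      rw [e1, e2, e3, Nat.cast_sub hiLk]
      linarith
    have T1 := hyp (b ^ k) 1 (b ^ t) _ _ hp hq1 (wlen S (b ^ k) - i) cond1
    have T1' : (wlen S ((W k (wlen S (b ^ k) - (wlen S (b ^ k) - i)))⁻¹ *
        (b ^ t * W (k - t) (wlen S (b ^ (k - t)) - (wlen S (b ^ k) - i)))) : ℝ) ≤ δ := T1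
    have e4 : wlen S (b ^ k) - (wlen S (b ^ k) - i) = i := by omega
    have e5 : wlen S (b ^ (k - t)) - (wlen S (b ^ k) - i) = s := by omega
    rw [e4, e5] at T1'
    have e6 : (b ^ (k - t))⁻¹ * b ^ k = b ^ t := by
      rw [← zpow_neg, ← zpow_add]; congr 1; ring
    have cond2 : (s : ℝ) ≤ ((wlen S ((1:G)⁻¹ * b ^ (k - t)) : ℝ)
        + (wlen S ((1:G)⁻¹ * b ^ k) : ℝ)
        - (wlen S ((b ^ (k - t))⁻¹ * b ^ k) : ℝ)) / 2 := by
      rw [inv_one, one_mul, one_mul, e6]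
      linarith [hδK]
    have T2 := hyp 1 (b ^ (k - t)) (b ^ k) (W (k - t)) (W k) hgkt hgk s cond2
    have hsplit2 : (W k i)⁻¹ * (b ^ t * W k s) =
        ((W k i)⁻¹ * (b ^ t * W (k - t) s)) * ((W (k - t) s)⁻¹ * W k s) := by group
    have hfin := hsub ((W k i)⁻¹ * (b ^ t * W (k - t) s)) ((W (k - t) s)⁻¹ * W k s)
    rw [← hsplit2] at hfin
    have hfinr : (wlen S ((W k i)⁻¹ * (b ^ t * W k s)) : ℝ) ≤
        (wlen S ((W k i)⁻¹ * (b ^ t * W (k - t) s)) : ℝ)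
        + (wlen S ((W (k - t) s)⁻¹ * W k s) : ℝ) := by exact_mod_cast hfin
    linarith [T1', T2]
  -- one-step improvement
  have step : ∀ t : ℤ, (wlen S (b^t):ℝ) ≤ (m:ℝ)*J →
      (wlen S (b^k):ℝ) - (wlen S (b^(k-t)):ℝ) ≤ 3*δ + m →
      (wlen S (b^k):ℝ) - (wlen S (b^(k-t)):ℝ) ≤ 3*δ := by
    intro t hlt hprior
    have hs0 : 0 ≤ (istar:ℤ) - ((wlen S (b^k):ℤ) - (wlen S (b^(k-t)):ℤ)) := by
      have h : (0:ℝ) ≤ (istar:ℝ) - ((wlen S (b^k):ℝ) - (wlen S (b^(k-t)):ℝ)) := by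
        linarith [hδK]
      exact_mod_cast h
    set s : ℕ := ((istar:ℤ) - ((wlen S (b^k):ℤ) - (wlen S (b^(k-t)):ℤ))).toNat with hsdef
    have hs : (s:ℤ) = (istar:ℤ) - ((wlen S (b^k):ℤ) - (wlen S (b^(k-t)):ℤ)) :=
      Int.toNat_of_nonneg hs0
    obtain ⟨hRRres, hsLk⟩ := use_RR t istar (by linarith) (by linarith)
        (by linarith) hprior s hs
    have hstar := star t istar histar_le
    have hws : wlen S (W k s) = s := hwlen k s hsLk
    have e : (b ^ t)⁻¹ * W k istar = W k s * ((W k istar)⁻¹ * (b ^ t * W k s))⁻¹ := by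
      group
    have h5 : wlen S ((b^t)⁻¹ * W k istar) ≤
        s + wlen S (((W k istar)⁻¹ * (b^t * W k s))⁻¹) := by
      rw [e]
      have h6 := hsub (W k s) (((W k istar)⁻¹ * (b ^ t * W k s))⁻¹)
      rw [hws] at h6
      exact h6
    rw [hsym] at h5
    have h5r : (wlen S ((b^t)⁻¹ * W k istar):ℝ) ≤
        (s:ℝ) + (wlen S ((W k istar)⁻¹ * (b^t * W k s)):ℝ) := by
      exact_mod_cast h5
    have hsR : (s:ℝ) = (istar:ℝ) - ((wlen S (b^k):ℝ) - (wlen S (b^(k-t)):ℝ)) := by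
      exact_mod_cast hs
    linarith [hstar, hRRres]
  -- the induction: all nearby powers have almost the same length
  have dd : ∀ jn : ℕ, jn ≤ J →
      ((wlen S (b^k):ℝ) - (wlen S (b^(k - (jn:ℤ))):ℝ) ≤ 3*δ) ∧
      ((wlen S (b^k):ℝ) - (wlen S (b^(k + (jn:ℤ))):ℝ) ≤ 3*δ) := by
    intro jn
    induction jn with
    | zero =>
        intro _
        constructor
        · have e : k - ((0:ℕ):ℤ) = k := by push_cast; ring
          rw [e]; linarith
        · have e : k + ((0:ℕ):ℤ) = k := by push_cast; ring
          rw [e]; linarith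
    | succ j ih =>
        intro hjn
        have ihj := ih (by omega)
        have hltn : wlen S (b ^ ((j+1:ℕ):ℤ)) ≤ J * m :=
          le_trans (hpow_le (j+1)) (Nat.mul_le_mul hjn le_rfl)
        have hltr : (wlen S (b ^ ((j+1:ℕ):ℤ)):ℝ) ≤ (m:ℝ)*J := by
          have hc : ((wlen S (b ^ ((j+1:ℕ):ℤ)):ℕ):ℝ) ≤ (J:ℝ)*(m:ℝ) := by
            exact_mod_cast hltn
          linarith
        constructor
        · have hpr : (wlen S (b^k):ℝ) - (wlen S (b^(k - ((j+1:ℕ):ℤ))):ℝ) ≤ 3*δ + m := by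
            have h1 := hstep1 (k - (j:ℤ))
            have e : k - (j:ℤ) - 1 = k - ((j+1:ℕ):ℤ) := by push_cast; ring
            rw [e] at h1
            have h1r : (wlen S (b^(k - (j:ℤ))):ℝ) ≤
                (wlen S (b^(k - ((j+1:ℕ):ℤ))):ℝ) + m := by exact_mod_cast h1
            have h2 := ihj.1
            linarith
          exact step ((j+1:ℕ):ℤ) hltr hpr
        · have hpr : (wlen S (b^k):ℝ) - (wlen S (b^(k - (-((j+1:ℕ):ℤ)))):ℝ) ≤ 3*δ + m := by
            have h1 := hstep2 (k + ((j+1:ℕ):ℤ))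
            have e : k + ((j+1:ℕ):ℤ) - 1 = k + (j:ℤ) := by push_cast; ring
            rw [e] at h1
            have h1r : (wlen S (b^(k + (j:ℤ))):ℝ) ≤
                (wlen S (b^(k + ((j+1:ℕ):ℤ))):ℝ) + m := by exact_mod_cast h1
            have h2 := ihj.2
            have e2 : k - (-((j+1:ℕ):ℤ)) = k + ((j+1:ℕ):ℤ) := by ring
            rw [e2]
            linarith
          have hltr2 : (wlen S (b ^ (-((j+1:ℕ):ℤ))):ℝ) ≤ (m:ℝ)*J := by
            rw [hpowneg]; exact hltr
          have h3 := step (-((j+1:ℕ):ℤ)) hltr2 hpr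
          have e2 : k - (-((j+1:ℕ):ℤ)) = k + ((j+1:ℕ):ℤ) := by ring
          rw [e2] at h3
          exact h3
  -- lower bound on the length differences
  have lower : ∀ jn : ℕ, 1 ≤ jn → jn ≤ J →
      -(7*δ) ≤ (wlen S (b^k):ℝ) - (wlen S (b^(k - (jn:ℤ))):ℝ) := by
    intro jn h1 hJn
    have hd := (dd jn hJn).1
    have hd' := (dd jn hJn).2
    have hltn : wlen S (b ^ (jn:ℤ)) ≤ J * m :=
      le_trans (hpow_le jn) (Nat.mul_le_mul hJn le_rfl)
    have hltr : (wlen S (b ^ (jn:ℤ)):ℝ) ≤ (m:ℝ)*J := by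
      have hc : ((wlen S (b ^ (jn:ℤ)):ℕ):ℝ) ≤ (J:ℝ)*(m:ℝ) := by exact_mod_cast hltn
      linarith
    have hdge : -(wlen S (b^(jn:ℤ)):ℝ) ≤ (wlen S (b^k):ℝ) - (wlen S (b^(k-(jn:ℤ))):ℝ) := by
      have hh := hppsub k (-(jn:ℤ))
      rw [hpowneg (jn:ℤ)] at hh
      have e : k + -(jn:ℤ) = k - (jn:ℤ) := by ring
      rw [e] at hh
      have hr : (wlen S (b^(k-(jn:ℤ))):ℝ) ≤ (wlen S (b^k):ℝ) + (wlen S (b^(jn:ℤ)):ℝ) := by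
        exact_mod_cast hh
      linarith
    have hs0 : 0 ≤ (istar:ℤ) - ((wlen S (b^k):ℤ) - (wlen S (b^(k-(jn:ℤ))):ℤ)) := by
      have hh : (0:ℝ) ≤ (istar:ℝ) - ((wlen S (b^k):ℝ) - (wlen S (b^(k-(jn:ℤ))):ℝ)) := by
        linarith [hδK]
      exact_mod_cast hh
    set s : ℕ := ((istar:ℤ) - ((wlen S (b^k):ℤ) - (wlen S (b^(k-(jn:ℤ))):ℤ))).toNat with hsdef
    have hs : (s:ℤ) = (istar:ℤ) - ((wlen S (b^k):ℤ) - (wlen S (b^(k-(jn:ℤ))):ℤ)) :=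
      Int.toNat_of_nonneg hs0
    have hsR : (s:ℝ) = (istar:ℝ) - ((wlen S (b^k):ℝ) - (wlen S (b^(k-(jn:ℤ))):ℝ)) := by
      exact_mod_cast hs
    obtain ⟨hA, hsLk⟩ := use_RR (jn:ℤ) istar (by linarith) (by linarith)
        (by linarith) (by linarith) s hs
    have hprior2 : (wlen S (b^k):ℝ) - (wlen S (b^(k - (-(jn:ℤ)))):ℝ) ≤ 3*δ + m := by
      have e2 : k - (-(jn:ℤ)) = k + (jn:ℤ) := by ring
      rw [e2]; linarith
    have hltr2 : (wlen S (b ^ (-(jn:ℤ))):ℝ) ≤ (m:ℝ)*J + m := by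
      rw [hpowneg]; linarith
    have hs0' : 0 ≤ (s:ℤ) - ((wlen S (b^k):ℤ) - (wlen S (b^(k - (-(jn:ℤ)))):ℤ)) := by
      have e2 : k - (-(jn:ℤ)) = k + (jn:ℤ) := by ring
      rw [e2]
      have hh : (0:ℝ) ≤ (s:ℝ) - ((wlen S (b^k):ℝ) - (wlen S (b^(k + (jn:ℤ))):ℝ)) := by
        linarith [hδK]
      exact_mod_cast hh
    set s2 : ℕ := ((s:ℤ) - ((wlen S (b^k):ℤ) - (wlen S (b^(k - (-(jn:ℤ)))):ℤ))).toNat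
      with hs2def
    have hs2 : (s2:ℤ) = (s:ℤ) - ((wlen S (b^k):ℤ) - (wlen S (b^(k - (-(jn:ℤ)))):ℤ)) :=
      Int.toNat_of_nonneg hs0'
    have hs2R : (s2:ℝ) = (s:ℝ) - ((wlen S (b^k):ℝ) - (wlen S (b^(k + (jn:ℤ))):ℝ)) := by
      have e2 : k - (-(jn:ℤ)) = k + (jn:ℤ) := by ring
      rw [e2] at hs2
      exact_mod_cast hs2
    obtain ⟨hB, hs2Lk⟩ := use_RR (-(jn:ℤ)) s (by linarith) (by linarith) hltr2 hprior2 s2 hs2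
    have hAB : (W k istar)⁻¹ * W k s2 =
        ((W k istar)⁻¹ * (b ^ (jn:ℤ) * W k s)) * ((W k s)⁻¹ * (b ^ (-(jn:ℤ)) * W k s2)) := by
      have hc : b ^ (jn:ℤ) * b ^ (-(jn:ℤ)) = 1 := by
        rw [← zpow_add]; norm_num
      calc (W k istar)⁻¹ * W k s2
          = (W k istar)⁻¹ * ((b ^ (jn:ℤ) * b ^ (-(jn:ℤ))) * W k s2) := by
            rw [hc, one_mul]
        _ = ((W k istar)⁻¹ * (b ^ (jn:ℤ) * W k s)) * ((W k s)⁻¹ * (b ^ (-(jn:ℤ)) * W k s2)) := by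
            group
    have hd4 : (wlen S ((W k istar)⁻¹ * W k s2):ℝ) ≤ 4*δ := by
      have hh := hsub ((W k istar)⁻¹ * (b ^ (jn:ℤ) * W k s))
        ((W k s)⁻¹ * (b ^ (-(jn:ℤ)) * W k s2))
      rw [← hAB] at hh
      have hhr : (wlen S ((W k istar)⁻¹ * W k s2):ℝ) ≤
          (wlen S ((W k istar)⁻¹ * (b ^ (jn:ℤ) * W k s)):ℝ)
          + (wlen S ((W k s)⁻¹ * (b ^ (-(jn:ℤ)) * W k s2)):ℝ) := by exact_mod_cast hh
      linarith
    have histarLk : istar ≤ wlen S (b^k) := by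
      have hh : (istar:ℝ) ≤ (wlen S (b^k):ℝ) := by linarith
      exact_mod_cast hh
    have hdist := hWd k istar histarLk s2 hs2Lk
    rw [hdist] at hd4
    have hfinal : -(4*δ) ≤ (istar:ℝ) - (s2:ℝ) := by
      rcases le_total istar s2 with hc | hc
      · rw [Nat.dist_eq_sub_of_le hc] at hd4
        have hcc : ((s2 - istar:ℕ):ℝ) = (s2:ℝ) - (istar:ℝ) := Nat.cast_sub hc
        rw [hcc] at hd4
        linarith
      · have hcc : (s2:ℝ) ≤ (istar:ℝ) := by exact_mod_cast hc
        linarith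
    rw [hs2R, hsR] at hfinal
    linarith [hd']
  -- pigeonhole
  obtain ⟨F, hF, hFcard⟩ := ball_bound S hS hgen (2*K)
  rw [← hndef] at hFcard
  have histar3K : 3*K ≤ istar := by
    have hh : (3*(K:ℝ)) ≤ (istar:ℝ) := by linarith
    exact_mod_cast hh
  have hmaps : ∀ jn ∈ Finset.Icc 1 J,
      (fun jn : ℕ => (((W k istar)⁻¹ * (b^(jn:ℤ) *
          W k (((istar:ℤ) - ((wlen S (b^k):ℤ) - (wlen S (b^(k - (jn:ℤ))):ℤ))).toNat))),
        ((istar:ℤ) - ((wlen S (b^k):ℤ) - (wlen S (b^(k - (jn:ℤ))):ℤ))).toNat)) jn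
        ∈ F ×ˢ Finset.Icc (istar - 3*K) (istar + 7*K) := by
    intro jn hjn
    simp only [Finset.mem_Icc] at hjn
    simp only [Finset.mem_product, Finset.mem_Icc]
    have hd := (dd jn hjn.2).1
    have hlo := lower jn hjn.1 hjn.2
    have hs0 : 0 ≤ (istar:ℤ) - ((wlen S (b^k):ℤ) - (wlen S (b^(k-(jn:ℤ))):ℤ)) := by
      have hh : (0:ℝ) ≤ (istar:ℝ) - ((wlen S (b^k):ℝ) - (wlen S (b^(k-(jn:ℤ))):ℝ)) := by
        linarith [hδK]
      exact_mod_cast hh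
    set s : ℕ := ((istar:ℤ) - ((wlen S (b^k):ℤ) - (wlen S (b^(k-(jn:ℤ))):ℤ))).toNat with hsdef
    have hs : (s:ℤ) = (istar:ℤ) - ((wlen S (b^k):ℤ) - (wlen S (b^(k-(jn:ℤ))):ℤ)) :=
      Int.toNat_of_nonneg hs0
    have hltn : wlen S (b ^ (jn:ℤ)) ≤ J * m :=
      le_trans (hpow_le jn) (Nat.mul_le_mul hjn.2 le_rfl)
    have hltr : (wlen S (b ^ (jn:ℤ)):ℝ) ≤ (m:ℝ)*J := by
      have hc : ((wlen S (b ^ (jn:ℤ)):ℕ):ℝ) ≤ (J:ℝ)*(m:ℝ) := by exact_mod_cast hltn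
      linarith
    obtain ⟨hA, hsLk⟩ := use_RR (jn:ℤ) istar (by linarith) (by linarith)
        (by linarith) (by linarith) s hs
    have hdle : ((wlen S (b^k):ℤ) - (wlen S (b^(k-(jn:ℤ))):ℤ)) ≤ 3*(K:ℤ) := by
      have hh : ((wlen S (b^k):ℝ) - (wlen S (b^(k-(jn:ℤ))):ℝ)) ≤ ((3*(K:ℤ)):ℝ) := by
        push_cast; linarith
      exact_mod_cast hh
    have hdge2 : -(7*(K:ℤ)) ≤ ((wlen S (b^k):ℤ) - (wlen S (b^(k-(jn:ℤ))):ℤ)) := by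
      have hh : ((-(7*(K:ℤ))):ℝ) ≤ ((wlen S (b^k):ℝ) - (wlen S (b^(k-(jn:ℤ))):ℝ)) := by
        push_cast; linarith
      exact_mod_cast hh
    refine ⟨?_, ?_, ?_⟩
    · refine hF _ ?_
      have hh : (wlen S ((W k istar)⁻¹ * (b^(jn:ℤ) * W k s)):ℝ) ≤ ((2*K:ℕ):ℝ) := by
        push_cast; linarith [hδK]
      exact_mod_cast hh
    · omega
    · omega
  have hwin : (Finset.Icc (istar - 3*K) (istar + 7*K)).card = 10*K + 1 := by
    rw [Nat.card_Icc]; omega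
  have hcardlt : (F ×ˢ Finset.Icc (istar - 3*K) (istar + 7*K)).card < (Finset.Icc 1 J).card := by
    rw [Finset.card_product, hwin, Nat.card_Icc]
    have hb1 : F.card * (10*K+1) ≤ (2*n+1)^(2*K+1) * (10*K+1) :=
      Nat.mul_le_mul hFcard le_rfl
    have hb2 : (2*n+1)^(2*K+1) * (10*K+1) < J := by
      rw [hJeq, Nat.mul_comm]
      exact Nat.lt_succ_self _
    omega
  obtain ⟨j1, hj1, j2, hj2, hne, heq⟩ :=
    Finset.exists_ne_map_eq_of_card_lt_of_maps_to hcardlt hmaps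
  simp only [Finset.mem_Icc] at hj1 hj2
  simp only [Prod.mk.injEq] at heq
  obtain ⟨heq1, heq2⟩ := heq
  rw [← heq2] at heq1
  have hb12 : b ^ (j1:ℤ) = b ^ (j2:ℤ) := mul_right_cancel (mul_left_cancel heq1)
  have hne12 : (j1:ℤ) ≠ (j2:ℤ) := by exact_mod_cast hne
  have hbrI : b ^ ((j2:ℤ) - (j1:ℤ)) = 1 := by
    rw [zpow_sub, ← hb12]
    simp
  set rn : ℕ := ((j2:ℤ) - (j1:ℤ)).natAbs with hrndef
  have hrn1 : 1 ≤ rn := by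
    have hz : (j2:ℤ) - (j1:ℤ) ≠ 0 := sub_ne_zero_of_ne (Ne.symm hne12)
    have := Int.natAbs_pos.mpr hz
    omega
  have hrnJ : rn ≤ J := by
    rw [hrndef]
    omega
  have hbrn : b ^ (rn:ℤ) = 1 := by
    have hcases := Int.natAbs_eq ((j2:ℤ) - (j1:ℤ))
    rw [← hrndef] at hcases
    rcases hcases with he | he
    · rw [← he]
      exact hbrI
    · have h2 : b ^ ((rn:ℕ):ℤ) = (b ^ ((j2:ℤ) - (j1:ℤ)))⁻¹ := by
        rw [he, zpow_neg, inv_inv]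
      rw [h2, hbrI, inv_one]
  have hrnz : ((rn:ℕ):ℤ) ≠ 0 := by
    have : (0:ℤ) < (rn:ℤ) := by exact_mod_cast hrn1
    omega
  obtain ⟨j₃, hj₃1, hj₃r, q, hq⟩ :
      ∃ j₃ : ℕ, 1 ≤ j₃ ∧ j₃ ≤ rn ∧ ∃ q : ℤ, k - (j₃:ℤ) = (rn:ℤ) * q := by
    by_cases hρ : k % (rn:ℤ) = 0
    · refine ⟨rn, hrn1, le_rfl, (k / (rn:ℤ)) - 1, ?_⟩
      have h := Int.mul_ediv_add_emod k (rn:ℤ)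
      rw [hρ, add_zero] at h
      rw [mul_sub, h]
      ring
    · have h0 : 0 ≤ k % (rn:ℤ) := Int.emod_nonneg k hrnz
      have hlt : k % (rn:ℤ) < (rn:ℤ) := Int.emod_lt_of_pos k (by exact_mod_cast hrn1)
      refine ⟨(k % (rn:ℤ)).toNat, by omega, by omega, k / (rn:ℤ), ?_⟩
      have h := Int.mul_ediv_add_emod k (rn:ℤ)
      have htn : (((k % (rn:ℤ)).toNat:ℕ):ℤ) = k % (rn:ℤ) := Int.toNat_of_nonneg h0
      rw [htn]
      linarith [h]
  have hbk3 : b ^ (k - (j₃:ℤ)) = 1 := by rw [hq, zpow_mul, hbrn, one_zpow]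
  have hL0 : wlen S (b ^ (k - (j₃:ℤ))) = 0 := by rw [hbk3, wlen_one]
  have hdd3 := (dd j₃ (le_trans hj₃r hrnJ)).1
  rw [hL0] at hdd3
  have h8 : (0:ℝ) ≤ 8*((m:ℝ)*J) := by positivity
  have hLk3 : (wlen S (b^k):ℝ) ≤ 3*δ := by
    push_cast at hdd3
    linarith
  linarith [hcon, hγL2, hδK, hK0, hbig]

end Stmt12Aux

open Stmt12Aux in
/-- (Lemma 2.21 of the paper.)  There is a constant
`c = c(δ, ♯S, |b|)` such that for all `z, b` there is one `x` working for all
integers `k` simultaneously: `z⁻¹ b^k z = x⁻¹ ·_c b^k ·_c x`. -/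
theorem stmt12 :
    ∃ c : ℝ → ℕ → ℕ → ℝ,
      ∀ (H : Type) [Group H] (S : Set H) (δ : ℝ),
        S.Finite → Subgroup.closure S = ⊤ → 0 ≤ δ → GroupHyperbolic S δ →
        ∀ z b : H,
          ∃ x : H, ∀ k : ℤ,
            z⁻¹ * b ^ k * z = x⁻¹ * b ^ k * x ∧
            CDot S (c δ S.ncard (wlen S b)) x⁻¹ (b ^ k) ∧
            CDot S (c δ S.ncard (wlen S b)) (b ^ k) x := by
  classical
  refine ⟨fun δ n m => ((Gfun δ n m : ℕ) : ℝ) + 1, ?_⟩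
  intro H _ S δ hS hgen hδ hyp z b
  have hne : (Set.range fun j : ℤ => wlen S (b ^ j * z)).Nonempty := ⟨_, ⟨0, rfl⟩⟩
  obtain ⟨j₀, hj₀⟩ := Nat.sInf_mem hne
  set x := b ^ j₀ * z with hxdef
  have hminx : ∀ t : ℤ, wlen S x ≤ wlen S (b ^ t * x) := by
    intro t
    have h1 : b ^ t * x = b ^ (t + j₀) * z := by
      rw [hxdef, ← mul_assoc, ← zpow_add]
    rw [h1, hxdef]
    calc wlen S (b ^ j₀ * z) = sInf (Set.range fun j : ℤ => wlen S (b ^ j * z)) := hj₀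
      _ ≤ wlen S (b ^ (t+j₀) * z) := Nat.sInf_le ⟨t + j₀, rfl⟩
  refine ⟨x, fun k => ⟨?_, ?_, ?_⟩⟩
  · have hcomm : (b ^ j₀)⁻¹ * b ^ k * b ^ j₀ = b ^ k := by
      rw [← zpow_neg, ← zpow_add, ← zpow_add]
      congr 1; ring
    rw [hxdef, mul_inv_rev]
    calc z⁻¹ * b ^ k * z = z⁻¹ * ((b ^ j₀)⁻¹ * b ^ k * b ^ j₀) * z := by rw [hcomm]
      _ = z⁻¹ * (b ^ j₀)⁻¹ * b ^ k * (b ^ j₀ * z) := by group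
  · unfold CDot
    rw [wlen_inv S hgen x]
    exact key_lemma S δ hS hgen hδ hyp b x hminx k
  · unfold CDot
    have e1 : wlen S (b ^ k * x) = wlen S (x⁻¹ * b ^ (-k)) := by
      rw [← wlen_inv S hgen (b ^ k * x), mul_inv_rev, zpow_neg]
    have e2 : wlen S (b ^ k) = wlen S (b ^ (-k)) := by
      rw [zpow_neg, wlen_inv S hgen]
    rw [e1, e2]
    have h := key_lemma S δ hS hgen hδ hyp b x hminx (-k)
    linarith
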